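/- Let τ : [0,1] → [0,1] be an admissible reparameterization with J(τ) = (∫₀¹ 𝔤(σ)^{1/2} dσ)². Then F(τ(t)) = t for every t ∈ [0,1]; in other words, the global minimizer of J among admissible reparameterizations is unique and equal to F⁻¹. -/

import Mathlib

/-- Cauchy–Schwarz for interval integrals: `(∫ h)² ≤ (v-u) ∫ h²`. -/
lemma gora_cs_aux (h : ℝ → ℝ) (u v : ℝ) (huv : u ≤ v)
    (hint : IntervalIntegrable h MeasureTheory.volume u v)
    (hint2 : IntervalIntegrable (fun x => h x ^ 2) MeasureTheory.volume u v) :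
    (∫ x in u..v, h x) ^ 2 ≤ (v - u) * ∫ x in u..v, h x ^ 2 := by
  rcases eq_or_lt_of_le huv with rfl | hlt
  · simp
  set a := ∫ x in u..v, h x with ha
  set A := ∫ x in u..v, h x ^ 2 with hA
  have hvu : 0 < v - u := by linarith
  set c : ℝ := a / (v - u) with hc
  have h0 : 0 ≤ ∫ x in u..v, (h x - c) ^ 2 :=
    intervalIntegral.integral_nonneg huv (fun x _ => sq_nonneg _)
  have hexp : ∫ x in u..v, (h x - c) ^ 2 = A - 2 * c * a + c ^ 2 * (v - u) := by
    have heq : ∀ x, (h x - c) ^ 2 = h x ^ 2 - (2 * c) * h x + c ^ 2 := by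
      intro x; ring
    simp_rw [heq]
    rw [intervalIntegral.integral_add (hint2.sub (hint.const_mul _))
        (intervalIntegrable_const),
      intervalIntegral.integral_sub hint2 (hint.const_mul _),
      intervalIntegral.integral_const_mul, intervalIntegral.integral_const]
    rw [← ha, ← hA, smul_eq_mul]; ring
  rw [hexp] at h0
  have h1 : c * (v - u) = a := div_mul_cancel₀ a hvu.ne'
  nlinarith [h0, h1, hvu, sq_nonneg (c * (v - u) - a)]

/-- **Uniqueness of the global minimizer.** If an admissible reparameterization `τ`
attains the lower bound `J(τ) = (∫₀¹ √(𝔤(σ)) dσ)²`, then `F (τ(t)) = t` for every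
`t ∈ [0,1]`; i.e. the global minimizer of `J` is unique and equal to `F⁻¹`. -/
theorem gora_minimizer_unique
    (𝔤 : ℝ → ℝ)
    (h𝔤_cont : ContinuousOn 𝔤 (Set.Icc 0 1))
    (h𝔤_pos : ∀ σ ∈ Set.Icc (0:ℝ) 1, 0 < 𝔤 σ)
    (F : ℝ → ℝ)
    (hF : ∀ s, F s =
      (∫ σ in (0:ℝ)..s, Real.sqrt (𝔤 σ)) / (∫ σ in (0:ℝ)..1, Real.sqrt (𝔤 σ)))
    (τ τ' : ℝ → ℝ)
    (hτ_maps : Set.MapsTo τ (Set.Icc 0 1) (Set.Icc 0 1))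
    (hτ_deriv : ∀ t ∈ Set.Icc (0:ℝ) 1, HasDerivWithinAt τ (τ' t) (Set.Icc 0 1) t)
    (hτ'_cont : ContinuousOn τ' (Set.Icc 0 1))
    (hτ'_nonneg : ∀ t ∈ Set.Icc (0:ℝ) 1, 0 ≤ τ' t)
    (hτ0 : τ 0 = 0) (hτ1 : τ 1 = 1)
    (hJ : (∫ t in (0:ℝ)..1, 𝔤 (τ t) * (τ' t) ^ 2)
        = (∫ σ in (0:ℝ)..1, Real.sqrt (𝔤 σ)) ^ 2) :
    ∀ t ∈ Set.Icc (0:ℝ) 1, F (τ t) = t := by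
  intro t ht
  set L : ℝ := ∫ σ in (0:ℝ)..1, Real.sqrt (𝔤 σ) with hL
  -- √𝔤 is continuous on [0,1]
  have hsg : ContinuousOn (fun σ => Real.sqrt (𝔤 σ)) (Set.Icc 0 1) :=
    Real.continuous_sqrt.comp_continuousOn h𝔤_cont
  -- L > 0
  have hLpos : 0 < L := by
    apply intervalIntegral.intervalIntegral_pos_of_pos_on
    · exact (hsg.mono (by rw [Set.uIcc_of_le zero_le_one])).intervalIntegrable
    · intro x hx
      exact Real.sqrt_pos.2 (h𝔤_pos x (Set.Ioo_subset_Icc_self hx))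
    · exact zero_lt_one
  -- τ continuous on [0,1]
  have hτ_cont : ContinuousOn τ (Set.Icc 0 1) :=
    fun x hx => (hτ_deriv x hx).continuousWithinAt
  -- the "speed" function
  set h : ℝ → ℝ := fun s => Real.sqrt (𝔤 (τ s)) * τ' s with hh_def
  have hh_cont : ContinuousOn h (Set.Icc 0 1) :=
    ((hsg.comp hτ_cont hτ_maps)).mul hτ'_cont
  have hh2_cont : ContinuousOn (fun s => h s ^ 2) (Set.Icc 0 1) := hh_cont.pow 2
  -- change of variables: ∫₀ᵘ h = ∫₀^{τ u} √𝔤 for u ∈ [0,1]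
  have hCOV : ∀ u ∈ Set.Icc (0:ℝ) 1,
      (∫ s in (0:ℝ)..u, h s) = ∫ σ in (0:ℝ)..(τ u), Real.sqrt (𝔤 σ) := by
    intro u hu
    have huIcc : Set.uIcc (0:ℝ) u = Set.Icc 0 u := Set.uIcc_of_le hu.1
    have hsub : Set.uIcc (0:ℝ) u ⊆ Set.Icc 0 1 := by
      rw [huIcc]; exact Set.Icc_subset_Icc le_rfl hu.2
    have hcov := intervalIntegral.integral_comp_smul_deriv''
      (f := τ) (f' := τ') (g := fun σ => Real.sqrt (𝔤 σ)) (a := 0) (b := u)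
      (hτ_cont.mono hsub)
      (fun x hx => by
        have hx' : x ∈ Set.Ioo (0:ℝ) 1 := by
          constructor
          · exact lt_of_le_of_lt (by simp [le_min_iff, hu.1]) hx.1
          · exact lt_of_lt_of_le hx.2 (by simp [max_le_iff, hu.2])
        exact ((hτ_deriv x (Set.Ioo_subset_Icc_self hx')).hasDerivAt
          (Icc_mem_nhds hx'.1 hx'.2)).hasDerivWithinAt)
      (hτ'_cont.mono hsub)
      (hsg.mono ((Set.image_mono (f := τ) hsub).trans (hτ_maps.image_subset)))
    rw [hτ0] at hcov
    rw [← hcov]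
    refine intervalIntegral.integral_congr (fun x _ => ?_)
    simp [hh_def, mul_comm]
  -- ∫₀¹ h = L
  have hIntL : (∫ s in (0:ℝ)..1, h s) = L := by
    rw [hCOV 1 (by norm_num), hτ1]
  -- ∫₀¹ h² = L²
  have hIntL2 : (∫ s in (0:ℝ)..1, h s ^ 2) = L ^ 2 := by
    rw [← hJ]
    refine intervalIntegral.integral_congr (fun x hx => ?_)
    rw [Set.uIcc_of_le zero_le_one] at hx
    have : (0:ℝ) ≤ 𝔤 (τ x) := (h𝔤_pos _ (hτ_maps hx)).le
    simp [hh_def, mul_pow, Real.sq_sqrt this]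
  -- split at t
  have ht1 : t ≤ 1 := ht.2
  have ht0 : 0 ≤ t := ht.1
  have hsub1 : Set.uIcc (0:ℝ) t ⊆ Set.Icc 0 1 := by
    rw [Set.uIcc_of_le ht0]; exact Set.Icc_subset_Icc le_rfl ht1
  have hsub2 : Set.uIcc t (1:ℝ) ⊆ Set.Icc 0 1 := by
    rw [Set.uIcc_of_le ht1]; exact Set.Icc_subset_Icc ht0 le_rfl
  have hi1 : IntervalIntegrable h MeasureTheory.volume 0 t :=
    (hh_cont.mono hsub1).intervalIntegrable
  have hi2 : IntervalIntegrable h MeasureTheory.volume t 1 :=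
    (hh_cont.mono hsub2).intervalIntegrable
  have hi1' : IntervalIntegrable (fun s => h s ^ 2) MeasureTheory.volume 0 t :=
    (hh2_cont.mono hsub1).intervalIntegrable
  have hi2' : IntervalIntegrable (fun s => h s ^ 2) MeasureTheory.volume t 1 :=
    (hh2_cont.mono hsub2).intervalIntegrable
  set a : ℝ := ∫ s in (0:ℝ)..t, h s with ha
  set b : ℝ := ∫ s in t..(1:ℝ), h s with hb
  set A : ℝ := ∫ s in (0:ℝ)..t, h s ^ 2 with hA
  set B : ℝ := ∫ s in t..(1:ℝ), h s ^ 2 with hB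
  have hab : a + b = L := by
    rw [ha, hb, intervalIntegral.integral_add_adjacent_intervals hi1 hi2, hIntL]
  have hAB : A + B = L ^ 2 := by
    rw [hA, hB, intervalIntegral.integral_add_adjacent_intervals hi1' hi2', hIntL2]
  have cs1 : a ^ 2 ≤ (t - 0) * A := gora_cs_aux h 0 t ht0 hi1 hi1'
  have cs2 : b ^ 2 ≤ (1 - t) * B := gora_cs_aux h t 1 ht1 hi2 hi2'
  have p1 : (1 - t) * a ^ 2 ≤ (1 - t) * ((t - 0) * A) :=
    mul_le_mul_of_nonneg_left cs1 (by linarith)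
  have p2 : t * b ^ 2 ≤ t * ((1 - t) * B) :=
    mul_le_mul_of_nonneg_left cs2 ht0
  have hsum : (1 - t) * a ^ 2 + t * b ^ 2 ≤ t * (1 - t) * (A + B) := by nlinarith [p1, p2]
  have hABr : t * (1 - t) * (A + B) = t * (1 - t) * (a + b) ^ 2 := by
    rw [hAB, ← hab]
  have key : (a * (1 - t) - b * t) ^ 2 ≤ 0 := by nlinarith [hsum, hABr]
  have hzero : a * (1 - t) - b * t = 0 := by
    have := le_antisymm key (sq_nonneg _)
    exact pow_eq_zero_iff (two_ne_zero).symm.symm |>.mp this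
  have haLt : a = L * t := by nlinarith [hzero, hab]
  -- conclude
  rw [hF, ← hCOV t ht, ← ha, haLt, mul_comm, mul_div_assoc, div_self hLpos.ne', mul_one]
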